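/- Let f(x) = 1 + (1-ε)·a/(x+εa) - N_F·e^{-cx} with a, c > 0, N_F > 1 and 0 ≤ ε < 1/N_F. If x_c > 0 satisfies f(x_c) = 0 and f'(x_c) = 0, then x_c = 2/(c(1 + √(1 + 4/(ac(1-ε))))) - εa. -/

import Mathlib

open Real

theorem double_root_formula
    (a c NF ε : ℝ) (ha : 0 < a) (hc : 0 < c) (hNF : 1 < NF)
    (hε0 : 0 ≤ ε) (hε : ε < 1 / NF)
    (f : ℝ → ℝ)
    (hf : ∀ x, f x = 1 + (1 - ε) * a / (x + ε * a) - NF * Real.exp (-c * x))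
    (xc : ℝ) (hxc : 0 < xc) (hroot : f xc = 0) (hderiv : deriv f xc = 0) :
    xc = 2 / (c * (1 + Real.sqrt (1 + 4 / (a * c * (1 - ε))))) - ε * a := by
  have hNF0 : 0 < NF := lt_trans one_pos hNF
  have hε1 : ε < 1 := lt_of_lt_of_le hε (by
    rw [div_le_one hNF0]; linarith)
  set A := (1 - ε) * a with hA
  have hApos : 0 < A := mul_pos (by linarith) ha
  set y := xc + ε * a with hy
  have hypos : 0 < y := by
    have : 0 ≤ ε * a := mul_nonneg hε0 ha.le
    rw [hy]; linarith
  have hfe : f = fun x => 1 + A / (x + ε * a) - NF * Real.exp (-c * x) := funext hf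
  set E := Real.exp (-c * xc) with hE
  have hEpos : 0 < E := Real.exp_pos _
  have hfder : HasDerivAt f (-A / y ^ 2 + c * NF * E) xc := by
    rw [hfe]
    have hd : HasDerivAt (fun x : ℝ => x + ε * a) 1 xc := (hasDerivAt_id xc).add_const _
    have h1 : HasDerivAt (fun x => A / (x + ε * a)) (-A / y ^ 2) xc := by
      have := (hasDerivAt_const xc A).div hd hypos.ne'
      refine this.congr_deriv ?_
      ring
    have hlin : HasDerivAt (fun x : ℝ => -c * x) (-c) xc := by
      simpa using (hasDerivAt_id xc).const_mul (-c)
    have h2 : HasDerivAt (fun x => NF * Real.exp (-c * x)) (NF * (E * (-c))) xc :=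
      (hlin.exp).const_mul NF
    have h3 := ((hasDerivAt_const xc (1 : ℝ)).add h1).sub h2
    refine h3.congr_deriv ?_
    ring
  have hD : -A / y ^ 2 + c * (NF * E) = 0 := by
    rw [← mul_assoc, ← hfder.deriv]; exact hderiv
  have hr : 1 + A / y - NF * E = 0 := by
    rw [hy, hE, ← hf xc]; exact hroot
  have key : A = c * y ^ 2 + c * A * y := by
    have e1 : NF * E = 1 + A / y := by linarith
    have e2 : A / y ^ 2 = c * (NF * E) := by
      rw [neg_div] at hD; linarith
    rw [e1] at e2
    field_simp at e2
    nlinarith [e2]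
  have hKey2 : A * (1 - c * y) = c * y ^ 2 := by linear_combination key
  have hcy : c * y < 1 := by nlinarith [mul_pos hc (mul_pos hypos hypos)]
  have hcy0 : 0 < c * y := mul_pos hc hypos
  set t := 2 / (c * y) - 1 with ht
  have hgt : 1 < 2 / (c * y) := by rw [lt_div_iff₀ hcy0]; linarith
  have ht0 : 0 ≤ t := by rw [ht]; linarith
  have hAc : a * c * (1 - ε) = A * c := by rw [hA]; ring
  have h4 : 4 / (A * c) = (4 - 4 * (c * y)) / (c * y) ^ 2 := by
    rw [div_eq_div_iff (by positivity) (by positivity)]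
    linear_combination (-4 * c) * hKey2
  have ht2 : t = (2 - c * y) / (c * y) := by
    rw [ht]; field_simp
  have hX : 1 + 4 / (a * c * (1 - ε)) = t ^ 2 := by
    rw [hAc, h4, ht2]
    field_simp
    ring
  rw [hX, Real.sqrt_sq ht0, ht]
  have h2 : 2 / (c * (1 + (2 / (c * y) - 1))) = y := by
    have hcne : c ≠ 0 := hc.ne'
    have hyne : y ≠ 0 := hypos.ne'
    field_simp
    ring
  rw [h2, hy]
  ring
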